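/- For n ≥ 2, φ_n is strictly increasing on [0, p*] and strictly decreasing on [p*, 1], where φ_n(p) = (n/(n-1))·(1-p)·(1-(1-p)^(n-1)) and p* = 1 - n^(-1/(n-1)). In particular, p* is the unique maximizer of φ_n on [0,1]. -/
import Mathlib

private lemma g_mono_anti (n : ℕ) (hn : 2 ≤ n) :
    StrictMonoOn (fun q : ℝ => q - q ^ n) (Set.Icc 0 ((n : ℝ) ^ (-(1 / ((n : ℝ) - 1))))) ∧
    StrictAntiOn (fun q : ℝ => q - q ^ n) (Set.Icc ((n : ℝ) ^ (-(1 / ((n : ℝ) - 1)))) 1) := by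
  set t : ℝ := (n : ℝ) ^ (-(1 / ((n : ℝ) - 1))) with ht
  have hn2 : (2 : ℝ) ≤ n := by exact_mod_cast hn
  have hn1 : (1 : ℝ) < n := by linarith
  have hnm1 : (1 : ℝ) ≤ (n : ℝ) - 1 := by linarith
  have ht0 : 0 < t := Real.rpow_pos_of_pos (by linarith) _
  have hinv : (0:ℝ) < 1 / ((n : ℝ) - 1) := by
    apply div_pos one_pos; linarith
  have ht1 : t < 1 := Real.rpow_lt_one_of_one_lt_of_neg hn1 (by linarith)
  have htp : t ^ (n - 1) = 1 / n := by
    rw [ht, ← Real.rpow_natCast ((n:ℝ) ^ (-(1 / ((n : ℝ) - 1)))) (n-1),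
      ← Real.rpow_mul (by linarith)]
    have : ((n - 1 : ℕ) : ℝ) = (n : ℝ) - 1 := by
      rw [Nat.cast_sub (by omega)]; norm_num
    rw [this]
    have hne : (n : ℝ) - 1 ≠ 0 := by linarith
    rw [show -(1 / ((n : ℝ) - 1)) * ((n:ℝ) - 1) = -1 by field_simp]
    rw [Real.rpow_neg_one]
    norm_num
  have hderiv : ∀ q : ℝ, HasDerivAt (fun q : ℝ => q - q ^ n)
      ((1:ℝ) - (n:ℝ) * q ^ (n - 1)) q := fun q => (hasDerivAt_id q).sub (hasDerivAt_pow n q)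
  have hd : deriv (fun q : ℝ => q - q ^ n) = fun q : ℝ => (1:ℝ) - (n:ℝ) * q ^ (n - 1) :=
    funext fun q => (hderiv q).deriv
  have hc : Continuous (fun q : ℝ => q - q ^ n) := by continuity
  constructor
  · apply strictMonoOn_of_deriv_pos (convex_Icc _ _) hc.continuousOn
    intro q hq
    rw [interior_Icc] at hq
    rw [hd]
    show (0:ℝ) < 1 - (n:ℝ) * q ^ (n - 1)
    have h1 : q ^ (n - 1) < t ^ (n - 1) :=
      pow_lt_pow_left₀ hq.2 hq.1.le (by omega)
    rw [htp] at h1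
    have : (n : ℝ) * q ^ (n - 1) < n * (1 / n) :=
      mul_lt_mul_of_pos_left h1 (by linarith)
    rw [mul_one_div_cancel (by linarith)] at this
    linarith
  · apply strictAntiOn_of_deriv_neg (convex_Icc _ _) hc.continuousOn
    intro q hq
    rw [interior_Icc] at hq
    rw [hd]
    show (1:ℝ) - (n:ℝ) * q ^ (n - 1) < 0
    have h1 : t ^ (n - 1) < q ^ (n - 1) :=
      pow_lt_pow_left₀ hq.1 ht0.le (by omega)
    rw [htp] at h1
    have : (n : ℝ) * (1 / n) < n * q ^ (n - 1) :=
      mul_lt_mul_of_pos_left h1 (by linarith)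
    rw [mul_one_div_cancel (by linarith)] at this
    linarith

/-- `φ_n` is strictly increasing on `[0,p*]`, strictly decreasing on `[p*,1]`,
and `p*` is the unique maximizer of `φ_n` on `[0,1]`. -/
theorem stmt_6 (n : ℕ) (hn : 2 ≤ n) :
    StrictMonoOn (fun p : ℝ => ((n : ℝ) / ((n : ℝ) - 1)) * (1 - p) * (1 - (1 - p) ^ (n - 1)))
      (Set.Icc 0 (1 - (n : ℝ) ^ (-(1 / ((n : ℝ) - 1))))) ∧
    StrictAntiOn (fun p : ℝ => ((n : ℝ) / ((n : ℝ) - 1)) * (1 - p) * (1 - (1 - p) ^ (n - 1)))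
      (Set.Icc (1 - (n : ℝ) ^ (-(1 / ((n : ℝ) - 1)))) 1) ∧
    ∀ p ∈ Set.Icc (0:ℝ) 1, p ≠ 1 - (n : ℝ) ^ (-(1 / ((n : ℝ) - 1))) →
      ((n : ℝ) / ((n : ℝ) - 1)) * (1 - p) * (1 - (1 - p) ^ (n - 1)) <
      ((n : ℝ) / ((n : ℝ) - 1)) * (1 - (1 - (n : ℝ) ^ (-(1 / ((n : ℝ) - 1))))) *
        (1 - (1 - (1 - (n : ℝ) ^ (-(1 / ((n : ℝ) - 1))))) ^ (n - 1)) := by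
  obtain ⟨hg1, hg2⟩ := g_mono_anti n hn
  set t : ℝ := (n : ℝ) ^ (-(1 / ((n : ℝ) - 1))) with ht
  have hn2 : (2 : ℝ) ≤ n := by exact_mod_cast hn
  have hn1 : (1 : ℝ) < n := by linarith
  have ht0 : 0 < t := Real.rpow_pos_of_pos (by linarith) _
  have hinv : (0:ℝ) < 1 / ((n : ℝ) - 1) := by
    apply div_pos one_pos; linarith
  have ht1 : t < 1 := Real.rpow_lt_one_of_one_lt_of_neg hn1 (by linarith)
  have hcpos : 0 < (n : ℝ) / ((n : ℝ) - 1) := by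
    apply div_pos <;> linarith
  set f : ℝ → ℝ := fun p => ((n : ℝ) / ((n : ℝ) - 1)) * (1 - p) * (1 - (1 - p) ^ (n - 1))
    with hf
  have hfe : ∀ p : ℝ, f p = ((n : ℝ) / ((n : ℝ) - 1)) * ((1 - p) - (1 - p) ^ n) := by
    intro p
    have : (1 - p) * (1 - p) ^ (n - 1) = (1 - p) ^ n := by
      rw [← pow_succ']
      congr 1
      omega
    simp only [hf]
    rw [mul_assoc, mul_sub, mul_one, this]
  have hmono : StrictMonoOn f (Set.Icc 0 (1 - t)) := by
    intro a ha b hb hab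
    rw [hfe, hfe]
    apply mul_lt_mul_of_pos_left _ hcpos
    have hga : (1 - a) ∈ Set.Icc t 1 := ⟨by simp only [Set.mem_Icc] at ha; linarith,
      by simp only [Set.mem_Icc] at ha; linarith⟩
    have hgb : (1 - b) ∈ Set.Icc t 1 := ⟨by simp only [Set.mem_Icc] at hb; linarith,
      by simp only [Set.mem_Icc] at hb; linarith⟩
    exact hg2 hgb hga (by linarith)
  have hanti : StrictAntiOn f (Set.Icc (1 - t) 1) := by
    intro a ha b hb hab
    rw [hfe, hfe]
    apply mul_lt_mul_of_pos_left _ hcpos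
    have hga : (1 - a) ∈ Set.Icc 0 t := ⟨by simp only [Set.mem_Icc] at ha; linarith,
      by simp only [Set.mem_Icc] at ha; linarith⟩
    have hgb : (1 - b) ∈ Set.Icc 0 t := ⟨by simp only [Set.mem_Icc] at hb; linarith,
      by simp only [Set.mem_Icc] at hb; linarith⟩
    exact hg1 hgb hga (by linarith)
  refine ⟨hmono, hanti, fun p hp hne => ?_⟩
  simp only [Set.mem_Icc] at hp
  rcases lt_or_gt_of_ne hne with h | h
  · exact hmono ⟨hp.1, h.le⟩ ⟨by linarith, le_refl _⟩ h
  · exact hanti ⟨le_refl _, by linarith⟩ ⟨h.le, hp.2⟩ h
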